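/- Let A be an n-by-n reciprocal matrix with n ≥ 4. Then E(A) = ⋃_{i=1}^{n} E(A;i), and moreover for every p ∈ {1,…,n}, E(A) = ⋃_{i=1, i≠p}^{n} E(A;i). -/

import Mathlib

def PosVec {ι : Type*} (w : ι → ℝ) : Prop := ∀ i, 0 < w i

def IsReciprocal {ι : Type*} (A : Matrix ι ι ℝ) : Prop :=
  (∀ i j, 0 < A i j) ∧ ∀ i j, A j i = 1 / A i j

def IsEfficient {ι : Type*} (A : Matrix ι ι ℝ) (w : ι → ℝ) : Prop :=
  PosVec w ∧ ∀ v : ι → ℝ, PosVec v →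
    (∀ i j, |A i j - v i / v j| ≤ |A i j - w i / w j|) →
    ∃ c : ℝ, 0 < c ∧ v = c • w

/-- The principal submatrix `A(k)` of `A` obtained by deleting row and column `k`. -/
def delMat {n : ℕ} (A : Matrix (Fin n) (Fin n) ℝ) (k : Fin n) :
    Matrix {i : Fin n // i ≠ k} {i : Fin n // i ≠ k} ℝ :=
  Matrix.of fun a b => A a.1 b.1

/-- The vector `w(k)` obtained from `w` by deleting the `k`-th entry. -/
def delVec {n : ℕ} (w : Fin n → ℝ) (k : Fin n) : {i : Fin n // i ≠ k} → ℝ :=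
  fun a => w a.1

/-- `E(A)`, the set of efficient vectors for `A`. -/
def Eset {ι : Type*} (A : Matrix ι ι ℝ) : Set (ι → ℝ) := {w | IsEfficient A w}

/-- `E(A; i)`, the set of efficient vectors `w` for `A` such that `w(i)` is efficient
for `A(i)`. -/
def EsetSub {n : ℕ} (A : Matrix (Fin n) (Fin n) ℝ) (i : Fin n) : Set (Fin n → ℝ) :=
  {w | IsEfficient A w ∧ IsEfficient (delMat A i) (delVec w i)}

set_option linter.unusedSectionVars false

section Helpers
variable {V : Type*}

lemma chain_reach {S : V → V → Prop} :
    ∀ (m : List V) (a b : V), List.Chain S a m → b ∈ a :: m →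
      Relation.ReflTransGen S a b := by
  intro m
  induction m with
  | nil => intro a b _ hb; simp at hb; subst hb; exact .refl
  | cons c m ih =>
      intro a b hch hb
      rcases List.chain_cons.1 hch with ⟨hac, hch'⟩
      rcases List.mem_cons.1 hb with hb | hb
      · subst hb; exact .refl
      · exact Relation.ReflTransGen.head hac (ih c b hch' hb)

lemma chain_reach_back {S : V → V → Prop} :
    ∀ (m : List V) (a p b : V), List.Chain S a (m ++ [p]) → b ∈ a :: m →
      Relation.ReflTransGen S b p := by
  intro m
  induction m with
  | nil =>
      intro a p b hch hb
      simp at hb; subst hb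
      rcases List.chain_cons.1 hch with ⟨h1, _⟩
      exact Relation.ReflTransGen.single h1
  | cons c m ih =>
      intro a p b hch hb
      rcases List.chain_cons.1 hch with ⟨hac, hch'⟩
      rcases List.mem_cons.1 hb with hb | hb
      · subst hb; exact Relation.ReflTransGen.head hac (ih c p c hch' (.head _))
      · exact ih c p b hch' hb

lemma exists_exit {R : V → V → Prop} (P : V → Prop) {a b : V}
    (h : Relation.ReflTransGen R a b) (ha : P a) (hb : ¬ P b) :
    ∃ x y, P x ∧ ¬ P y ∧ R x y := by
  induction h with
  | refl => exact absurd ha hb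
  | tail h1 h2 ih =>
      rename_i b' c'
      by_cases hp : P b'
      · exact ⟨b', c', hp, hb, h2⟩
      · exact ih hp

lemma chain_insert {S : V → V → Prop} (u : V) :
    ∀ (m : List V) (a b : V), List.Chain S a (m ++ [b]) →
      ∀ x y, (x, y) ∈ List.zip (a :: m) (m ++ [b]) → S x u → S u y →
      ∃ m', List.Chain S a (m' ++ [b]) ∧ m'.Perm (u :: m) := by
  intro m
  induction m with
  | nil =>
      intro a b hch x y hxy hxu huy
      simp [List.zip] at hxy
      obtain ⟨hx, hy⟩ := hxy; subst hx; subst hy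
      exact ⟨[u], List.chain_cons.2 ⟨hxu, List.chain_cons.2 ⟨huy, .singleton _⟩⟩, .refl _⟩
  | cons c m ih =>
      intro a b hch x y hxy hxu huy
      rcases List.chain_cons.1 hch with ⟨hac, hch'⟩
      rcases List.mem_cons.1 hxy with heq | hmem
      · rw [Prod.mk.injEq] at heq
        obtain ⟨hx, hy⟩ := heq
        exact ⟨u :: c :: m,
          List.chain_cons.2 ⟨hx ▸ hxu, List.chain_cons.2 ⟨hy ▸ huy, hch'⟩⟩,
          .refl _⟩
      · obtain ⟨m₂, hch₂, hperm⟩ := ih c b hch' x y hmem hxu huy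
        exact ⟨c :: m₂, List.chain_cons.2 ⟨hac, hch₂⟩,
          (hperm.cons c).trans (List.Perm.swap u c m)⟩

lemma prop_forward (P : V → Prop) :
    ∀ (m : List V) (a b : V),
      (∀ x y, (x, y) ∈ List.zip (a :: m) (m ++ [b]) → P x → P y) →
      P a → ∀ y ∈ m ++ [b], P y := by
  intro m
  induction m with
  | nil =>
      intro a b hstep ha y hy
      simp at hy; subst hy
      exact hstep a y (by simp [List.zip]) ha
  | cons c m ih =>
      intro a b hstep ha y hy
      have hc : P c := hstep a c (by simp [List.zip]) ha
      rcases List.mem_cons.1 hy with hy | hy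
      · subst hy; exact hc
      · exact ih c b (fun x y hxy => hstep x y (List.mem_cons_of_mem _ hxy)) hc y hy

lemma prop_to_end (P : V → Prop) :
    ∀ (m : List V) (a b c : V),
      (∀ x y, (x, y) ∈ List.zip (a :: m) (m ++ [b]) → P x → P y) →
      c ∈ a :: m → P c → P b := by
  intro m
  induction m with
  | nil =>
      intro a b c hstep hc hPc
      simp at hc; subst hc
      exact hstep c b (by simp [List.zip]) hPc
  | cons d m ih =>
      intro a b c hstep hc hPc
      rcases List.mem_cons.1 hc with hc | hc
      · subst hc
        have hd : P d := hstep c d (by simp [List.zip]) hPc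
        exact ih d b d (fun x y hxy => hstep x y (List.mem_cons_of_mem _ hxy)) (.head _) hd
      · exact ih d b c (fun x y hxy => hstep x y (List.mem_cons_of_mem _ hxy)) hc hPc

lemma mem_snd_zip :
    ∀ (m : List V) (a b y : V), y ∈ m ++ [b] →
      ∃ x, (x, y) ∈ List.zip (a :: m) (m ++ [b]) := by
  intro m
  induction m with
  | nil =>
      intro a b y hy
      simp at hy; subst hy
      exact ⟨a, by simp [List.zip]⟩
  | cons c m ih =>
      intro a b y hy
      rcases List.mem_cons.1 hy with hy | hy
      · subst hy; exact ⟨a, by simp [List.zip]⟩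
      · obtain ⟨x, hx⟩ := ih c b y hy
        exact ⟨x, List.mem_cons_of_mem _ hx⟩

end Helpers
section Graph
variable {V : Type*} [Fintype V] [DecidableEq V] {R : V → V → Prop}

def IsCyc (R : V → V → Prop) (p : V) (l : List V) : Prop :=
  List.Chain R p (l ++ [p]) ∧ (p :: l).Nodup

lemma around_cycle (hsemi : ∀ x y, R x y ∨ R y x) {p : V} {l : List V}
    (hch : List.Chain R p (l ++ [p])) {u c c' : V}
    (hc : c ∈ p :: l) (hcu : R c u) (hc' : c' ∈ p :: l) (huc' : R u c') :
    ∃ x y, (x, y) ∈ List.zip (p :: l) (l ++ [p]) ∧ R x u ∧ R u y := by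
  by_contra hno
  push_neg at hno
  have hstep : ∀ x y, (x, y) ∈ List.zip (p :: l) (l ++ [p]) → R x u → R y u := by
    intro x y hxy hxu
    rcases hsemi u y with h | h
    · exact absurd h (hno x y hxy hxu)
    · exact h
  have hp : R p u := by
    rcases List.mem_cons.1 hc with h | h
    · exact h ▸ hcu
    · exact prop_to_end (fun z => R z u) l p p c hstep hc hcu
  have hall : ∀ y ∈ p :: l, R y u := by
    intro y hy
    rcases List.mem_cons.1 hy with h | h
    · exact h ▸ hp
    · exact prop_forward (fun z => R z u) l p p hstep hp y (List.mem_append_left _ h)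
  have hc'' : c' ∈ l ++ [p] := by
    rcases List.mem_cons.1 hc' with h | h
    · subst h; exact List.mem_append_right _ (by simp)
    · exact List.mem_append_left _ h
  obtain ⟨x, hx⟩ := mem_snd_zip l p p c' hc''
  exact hno x c' hx (hall x (List.of_mem_zip hx).1) huc'

lemma cyc_extend (hsemi : ∀ x y, R x y ∨ R y x)
    (hstrong : ∀ x y, Relation.ReflTransGen R x y)
    {p : V} {l : List V} (hc : IsCyc R p l) (hl : l ≠ [])
    (hcard : (p :: l).length < Fintype.card V) :
    ∃ l', IsCyc R p l' ∧ l'.length = l.length + 1 := by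
  obtain ⟨hch, hnd⟩ := hc
  -- there is a vertex outside the cycle
  have houts : ∃ u, u ∉ p :: l := by
    by_contra h
    push_neg at h
    have : Fintype.card V ≤ (p :: l).length := by
      classical
      have h1 : (Finset.univ : Finset V) ⊆ (p :: l).toFinset := fun x _ => List.mem_toFinset.2 (h x)
      calc Fintype.card V = (Finset.univ : Finset V).card := rfl
        _ ≤ (p :: l).toFinset.card := Finset.card_le_card h1
        _ ≤ (p :: l).length := (p :: l).toFinset_card_le
    omega
  by_cases hins : ∃ u, u ∉ p :: l ∧ ∃ x y,
      (x, y) ∈ List.zip (p :: l) (l ++ [p]) ∧ R x u ∧ R u y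
  · obtain ⟨u, hu, x, y, hxy, hxu, huy⟩ := hins
    obtain ⟨m', hch', hperm⟩ := chain_insert u l p p hch x y hxy hxu huy
    refine ⟨m', ⟨hch', ?_⟩, hperm.length_eq.trans (by simp)⟩
    have : (p :: m').Perm (p :: u :: l) := hperm.cons p
    refine this.symm.nodup ?_
    have hup : u ≠ p := fun h => hu (h ▸ List.mem_cons_self)
    have hul : u ∉ l := fun h => hu (List.mem_cons_of_mem _ h)
    rcases List.nodup_cons.1 hnd with ⟨hpl, hndl⟩
    refine List.nodup_cons.2 ⟨?_, List.nodup_cons.2 ⟨hul, hndl⟩⟩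
    simp only [List.mem_cons]
    rintro (h | h)
    · exact hup h.symm
    · exact hpl h
  · push_neg at hins
    -- O and I sets
    have hcov : ∀ u, u ∉ (p :: l) → (∀ y ∈ (p :: l), ¬ R u y) ∨ (∀ x ∈ (p :: l), ¬ R x u) := by
      intro u hu
      by_contra h
      push_neg at h
      obtain ⟨⟨y, hy, huy⟩, x, hx, hxu⟩ := h
      obtain ⟨a, b, hab, h1, h2⟩ := around_cycle hsemi hch hx hxu hy huy
      exact hins u hu a b hab h1 h2
    obtain ⟨u0, hu0⟩ := houts
    -- O nonempty
    have hO : ∃ o, o ∉ (p :: l) ∧ ∀ y ∈ (p :: l), ¬ R o y := by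
      obtain ⟨x, y, hx, hy, hxy⟩ := exists_exit (· ∈ (p :: l)) (hstrong p u0) (List.mem_cons_self) hu0
      rcases hcov y hy with h | h
      · exact ⟨y, hy, h⟩
      · exact absurd hxy (h x hx)
    obtain ⟨o, hoC, hoO⟩ := hO
    -- arc from O to I
    have hOI : ∃ o' i', (o' ∉ (p :: l) ∧ ∀ y ∈ (p :: l), ¬ R o' y) ∧ (i' ∉ (p :: l) ∧ ∀ x ∈ (p :: l), ¬ R x i') ∧ R o' i' := by
      have hnotO : ¬ (p ∉ (p :: l) ∧ ∀ y ∈ (p :: l), ¬ R p y) := fun h => h.1 (List.mem_cons_self)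
      obtain ⟨x, y, hx, hy, hxy⟩ :=
        exists_exit (fun z => z ∉ (p :: l) ∧ ∀ y ∈ (p :: l), ¬ R z y) (hstrong o p) ⟨hoC, hoO⟩ hnotO
      have hyC : y ∉ (p :: l) := fun h => hx.2 y h hxy
      rcases hcov y hyC with h | h
      · exact absurd ⟨hyC, h⟩ hy
      · exact ⟨x, y, hx, ⟨hyC, h⟩, hxy⟩
    obtain ⟨o', i', ⟨ho'C, ho'⟩, ⟨hi'C, hi'⟩, hoi⟩ := hOI
    -- rewire: drop v2
    obtain ⟨v2, rest, hrest⟩ := List.exists_cons_of_ne_nil hl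
    refine ⟨o' :: i' :: rest, ⟨?_, ?_⟩, by simp [hrest]⟩
    · -- chain
      have hpo : R p o' := by
        rcases hsemi o' p with h | h
        · exact absurd h (ho' p (List.mem_cons_self))
        · exact h
      refine List.chain_cons.2 ⟨hpo, List.chain_cons.2 ⟨hoi, ?_⟩⟩
      -- Chain R i' (rest ++ [p])
      have hold : List.Chain R v2 (rest ++ [p]) := by
        have := hch
        rw [hrest] at this
        exact (List.chain_cons.1 this).2
      obtain ⟨x0, xs, hx0⟩ := List.exists_cons_of_ne_nil
        (show rest ++ [p] ≠ [] by simp)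
      rw [hx0] at hold
      show List.Chain R i' (rest ++ [p])
      rw [hx0]
      have hx0C : x0 ∈ (p :: l) := by
        have : x0 ∈ rest ++ [p] := hx0 ▸ List.mem_cons_self
        rcases List.mem_append.1 this with h | h
        · exact List.mem_cons_of_mem _ (hrest ▸ List.mem_cons_of_mem _ h)
        · simp at h; exact h ▸ List.mem_cons_self
      have : R i' x0 := by
        rcases hsemi x0 i' with h | h
        · exact absurd h (hi' x0 hx0C)
        · exact h
      exact List.chain_cons.2 ⟨this, (List.chain_cons.1 hold).2⟩
    · -- nodup
      have ho'i' : o' ≠ i' := by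
        intro h
        rcases hsemi o' p with h1 | h1
        · exact ho' p (List.mem_cons_self) h1
        · exact (h ▸ hi') p (List.mem_cons_self) h1
      have hndrest : (p :: rest).Nodup := by
        rw [hrest] at hnd
        rcases List.nodup_cons.1 hnd with ⟨hp1, h2⟩
        rcases List.nodup_cons.1 h2 with ⟨_, h3⟩
        exact List.nodup_cons.2 ⟨fun h => hp1 (List.mem_cons_of_mem _ h), h3⟩
      have hmemC : ∀ x ∈ p :: rest, x ∈ (p :: l) := by
        intro x hx
        rcases List.mem_cons.1 hx with h | h
        · exact h ▸ List.mem_cons_self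
        · exact List.mem_cons_of_mem _ (hrest ▸ List.mem_cons_of_mem _ h)
      rcases List.nodup_cons.1 hndrest with ⟨hprest, hndr⟩
      refine List.nodup_cons.2 ⟨?_, List.nodup_cons.2 ⟨?_, List.nodup_cons.2 ⟨?_, hndr⟩⟩⟩
      · simp only [List.mem_cons]
        rintro (h | h | h)
        · exact ho'C (h ▸ List.mem_cons_self)
        · exact hi'C (h ▸ List.mem_cons_self)
        · exact hprest h
      · simp only [List.mem_cons]
        rintro (h | h)
        · exact ho'i' h
        · exact ho'C (hmemC _ (List.mem_cons_of_mem _ h))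
      · intro h
        exact hi'C (hmemC _ (List.mem_cons_of_mem _ h))

end Graph

section Graph2
variable {V : Type*} [Fintype V] [DecidableEq V] {R : V → V → Prop}

lemma cyc_base (hsemi : ∀ x y, R x y ∨ R y x)
    (hstrong : ∀ x y, Relation.ReflTransGen R x y)
    (hcard : 2 ≤ Fintype.card V) (p : V) :
    ∃ l, IsCyc R p l ∧ l ≠ [] ∧ l.length ≤ 2 := by
  by_cases hdig : ∃ u, u ≠ p ∧ R p u ∧ R u p
  · obtain ⟨u, hup, h1, h2⟩ := hdig
    refine ⟨[u], ⟨?_, ?_⟩, by simp, by simp⟩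
    · exact List.chain_cons.2 ⟨h1, List.chain_cons.2 ⟨h2, .singleton _⟩⟩
    · exact List.nodup_cons.2 ⟨by simpa using fun h => hup h.symm, by simp⟩
  · push_neg at hdig
    -- O u := u ≠ p ∧ ¬ R u p ; I u := u ≠ p ∧ ¬ R p u
    have hcov : ∀ u, u ≠ p → (¬ R u p) ∨ (¬ R p u) := by
      intro u hu
      by_contra h
      push_neg at h
      exact hdig u hu h.2 h.1 |>.elim
    obtain ⟨u0, hu0⟩ := Fintype.exists_ne_of_one_lt_card (by omega) p
    have hOne : ∃ o, o ≠ p ∧ ¬ R o p := by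
      obtain ⟨x, y, hx, hy, hxy⟩ := exists_exit (· = p) (hstrong p u0) rfl hu0
      subst hx
      rcases hcov y hy with h | h
      · exact ⟨y, hy, h⟩
      · exact absurd hxy h
    obtain ⟨o, hop, hoO⟩ := hOne
    obtain ⟨x, y, hx, hy, hxy⟩ :=
      exists_exit (fun z => z ≠ p ∧ ¬ R z p) (hstrong o p) ⟨hop, hoO⟩ (by simp)
    have hyp : y ≠ p := by
      intro h; subst h; exact hx.2 hxy
    have hIy : ¬ R p y := by
      rcases hcov y hyp with h | h
      · exact absurd ⟨hyp, h⟩ hy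
      · exact h
    have hpx : R p x := (hsemi p x).resolve_right hx.2
    have hyP : R y p := (hsemi p y).resolve_left hIy
    have hxy' : x ≠ y := by
      intro h; subst h; exact hIy hpx
    refine ⟨[x, y], ⟨?_, ?_⟩, by simp, by simp⟩
    · exact List.chain_cons.2 ⟨hpx, List.chain_cons.2 ⟨hxy, List.chain_cons.2 ⟨hyP, .singleton _⟩⟩⟩
    · simp [List.nodup_cons]
      exact ⟨⟨Ne.symm hx.1, Ne.symm hyp⟩, hxy'⟩

lemma cyc_grow (hsemi : ∀ x y, R x y ∨ R y x)
    (hstrong : ∀ x y, Relation.ReflTransGen R x y) (p : V) :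
    ∀ (d : ℕ) (l : List V), IsCyc R p l → l ≠ [] →
      l.length + d = Fintype.card V - 2 →
      ∃ l', IsCyc R p l' ∧ l' ≠ [] ∧ l'.length = Fintype.card V - 2 := by
  intro d
  induction d with
  | zero => exact fun l hc hne hlen => ⟨l, hc, hne, by omega⟩
  | succ d ih =>
      intro l hc hne hlen
      have h2 : 2 ≤ Fintype.card V := by
        have := List.length_pos_iff.2 hne
        omega
      obtain ⟨l', hc', hlen'⟩ := cyc_extend hsemi hstrong hc hne
        (by simp only [List.length_cons]; omega)
      exact ih l' hc' (by rw [← List.length_pos_iff]; omega) (by omega)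

lemma graph_main (hsemi : ∀ x y, R x y ∨ R y x)
    (hstrong : ∀ x y, Relation.ReflTransGen R x y)
    (hcard : 4 ≤ Fintype.card V) (p : V) :
    ∃ i, i ≠ p ∧ ∀ a b : {x : V // x ≠ i},
      Relation.ReflTransGen (fun a b => R a.1 b.1) a b := by
  obtain ⟨l0, hc0, hne0, hlen0⟩ := cyc_base hsemi hstrong (by omega) p
  obtain ⟨l, hc, hne, hlen⟩ := cyc_grow hsemi hstrong p (Fintype.card V - 2 - l0.length)
    l0 hc0 hne0 (by have := List.length_pos_iff.2 hne0; omega)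
  obtain ⟨hch, hnd⟩ := hc
  -- missing vertex
  have houts : ∃ i, i ∉ p :: l := by
    by_contra h
    push_neg at h
    have h1 : (Finset.univ : Finset V) ⊆ (p :: l).toFinset := fun x _ => List.mem_toFinset.2 (h x)
    have : Fintype.card V ≤ (p :: l).length :=
      le_trans (Finset.card_le_card h1) ((p :: l).toFinset_card_le)
    simp only [List.length_cons] at this
    omega
  obtain ⟨i, hi⟩ := houts
  have hip : i ≠ p := fun h => hi (h ▸ List.mem_cons_self)
  have hmem : ∀ x, x ≠ i → x ∈ p :: l := by
    intro x hx
    by_contra hxl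
    have hnd2 : (i :: x :: p :: l).Nodup := by
      refine List.nodup_cons.2 ⟨?_, List.nodup_cons.2 ⟨hxl, hnd⟩⟩
      simp only [List.mem_cons]
      rintro (h | h | h)
      · exact hx h.symm
      · exact hip h
      · exact hi (List.mem_cons_of_mem _ h)
    have := hnd2.length_le_card
    simp only [List.length_cons] at this
    omega
  -- restricted relation
  have hchain2 : List.Chain (fun x y => R x y ∧ x ≠ i ∧ y ≠ i) p (l ++ [p]) := by
    have hmem' : ∀ x ∈ p :: l, x ≠ i := fun x hx h => hi (h ▸ hx)
    clear hlen hnd hmem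
    -- strengthen chain
    have : ∀ (m : List V) (a : V), List.Chain R a m → (∀ x ∈ a :: m, x ∈ p :: l ∨ x = p) →
        List.Chain (fun x y => R x y ∧ x ≠ i ∧ y ≠ i) a m := by
      intro m
      induction m with
      | nil => intro a _ _; exact .nil
      | cons c m ihm =>
          intro a hch2 hmm
          rcases List.chain_cons.1 hch2 with ⟨hac, hch'⟩
          refine List.chain_cons.2 ⟨⟨hac, ?_, ?_⟩, ihm c hch' ?_⟩
          · rcases hmm a (List.mem_cons_self) with h | h
            · exact hmem' a h
            · exact h.symm ▸ hip.symm
          · rcases hmm c (List.mem_cons_of_mem _ (List.mem_cons_self)) with h | h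
            · exact hmem' c h
            · exact h.symm ▸ hip.symm
          · intro x hx; exact hmm x (List.mem_cons_of_mem _ hx)
    refine this (l ++ [p]) p hch ?_
    intro x hx
    rcases List.mem_cons.1 hx with h | h
    · exact Or.inr h
    · rcases List.mem_append.1 h with h | h
      · exact Or.inl (List.mem_cons_of_mem _ h)
      · simp at h; exact Or.inr h
  refine ⟨i, hip, ?_⟩
  rintro ⟨a, ha⟩ ⟨b, hb⟩
  have hra : Relation.ReflTransGen (fun x y => R x y ∧ x ≠ i ∧ y ≠ i) a p :=
    chain_reach_back (S := fun x y => R x y ∧ x ≠ i ∧ y ≠ i) l p p a hchain2 (hmem a ha)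
  have hrb : Relation.ReflTransGen (fun x y => R x y ∧ x ≠ i ∧ y ≠ i) p b :=
    chain_reach (S := fun x y => R x y ∧ x ≠ i ∧ y ≠ i) (l ++ [p]) p b hchain2
      (by rcases List.mem_cons.1 (hmem b hb) with h | h
          · exact h ▸ List.mem_cons_self
          · exact List.mem_cons_of_mem _ (List.mem_append_left _ h))
  have key : ∀ {x y : V}, Relation.ReflTransGen (fun x y => R x y ∧ x ≠ i ∧ y ≠ i) x y →
      ∀ (hx : x ≠ i) (hy : y ≠ i),
      Relation.ReflTransGen (fun a b : {v : V // v ≠ i} => R a.1 b.1) ⟨x, hx⟩ ⟨y, hy⟩ := by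
    intro x y h
    induction h with
    | refl => intro hx hy; exact .refl
    | tail h1 h2 ih =>
        intro hx hy
        exact Relation.ReflTransGen.tail (ih hx h2.2.1) h2.1
  exact Relation.ReflTransGen.trans (key hra ha hip.symm) (key hrb hip.symm hb)

end Graph2
/-- the arc relation of the pair `(A, w)`. -/
def Arc {ι : Type*} (A : Matrix ι ι ℝ) (w : ι → ℝ) (i j : ι) : Prop :=
  A i j ≤ w i / w j

section Eff
variable {ι : Type*} [Fintype ι]

lemma arc_semi {A : Matrix ι ι ℝ} {w : ι → ℝ} (hA : IsReciprocal A) (hw : PosVec w) :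
    ∀ i j, Arc A w i j ∨ Arc A w j i := by
  intro i j
  by_cases h : A i j ≤ w i / w j
  · exact Or.inl h
  · right
    push_neg at h
    have hwj := hw j
    have hwi := hw i
    have hAij := hA.1 i j
    have hratio : 0 < w i / w j := div_pos hwi hwj
    unfold Arc
    rw [hA.2 i j]
    have h' : w i < A i j * w j := (div_lt_iff₀ hwj).1 h
    rw [div_le_div_iff₀ hAij hwi]
    nlinarith

/-- strong connectivity implies efficiency (needs only positivity of w). -/
lemma strong_imp_eff [Nonempty ι] {A : Matrix ι ι ℝ} {w : ι → ℝ} (hw : PosVec w)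
    (hstrong : ∀ i j, Relation.ReflTransGen (Arc A w) i j) : IsEfficient A w := by
  refine ⟨hw, ?_⟩
  intro v hv hle
  set t : ι → ℝ := fun k => v k / w k with ht
  obtain ⟨i, _, hmax⟩ := Finset.exists_max_image Finset.univ t ⟨Classical.arbitrary ι, Finset.mem_univ _⟩
  set M := t i with hM
  have hMpos : 0 < M := div_pos (hv i) (hw i)
  refine ⟨M, hMpos, ?_⟩
  have hall : ∀ k, t k = M := by
    by_contra h
    push_neg at h
    obtain ⟨j, hj⟩ := h
    have hij := hstrong i j
    obtain ⟨x, y, hx, hy, hxy⟩ := exists_exit (fun k => t k = M) hij rfl hj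
    -- t x = M, t y < M, Arc x y : contradiction
    have hty : t y < M := lt_of_le_of_ne (hmax y (Finset.mem_univ _)) hy
    have h4 : 0 < t y := div_pos (hv y) (hw y)
    have hvw : w x / w y < v x / v y := by
      have h1 : v x = M * w x := by
        rw [← hx]
        show v x = v x / w x * w x
        rw [div_mul_cancel₀ _ (ne_of_gt (hw x))]
      have h2 : v y = t y * w y := by
        show v y = v y / w y * w y
        rw [div_mul_cancel₀ _ (ne_of_gt (hw y))]
      rw [h1, h2, div_lt_div_iff₀ (hw y) (mul_pos h4 (hw y))]
      nlinarith [mul_pos (sub_pos.2 hty) (mul_pos (hw x) (hw y))]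
    have habs := hle x y
    have harc : A x y ≤ w x / w y := hxy
    have h1 : |A x y - w x / w y| = w x / w y - A x y := by
      rw [abs_of_nonpos (by linarith)]; ring
    have h2 : A x y < v x / v y := lt_of_le_of_lt harc hvw
    have h3 : |A x y - v x / v y| = v x / v y - A x y := by
      rw [abs_of_nonpos (by linarith)]; ring
    rw [h1, h3] at habs
    linarith
  funext k
  have hk := hall k
  simp only [Pi.smul_apply, smul_eq_mul]
  rw [← hk]
  show v k = v k / w k * w k
  rw [div_mul_cancel₀ _ (ne_of_gt (hw k))]
end Eff

section Eff2
variable {ι : Type*} [Fintype ι]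

lemma eff_imp_strong {A : Matrix ι ι ℝ} {w : ι → ℝ} (hA : IsReciprocal A)
    (heff : IsEfficient A w) :
    ∀ i j, Relation.ReflTransGen (Arc A w) i j := by
  classical
  obtain ⟨hw, heff⟩ := heff
  by_contra h
  push_neg at h
  obtain ⟨i0, j0, hij0⟩ := h
  set S : ι → Prop := fun k => Relation.ReflTransGen (Arc A w) i0 k with hS
  have hSi0 : S i0 := .refl
  have hSj0 : ¬ S j0 := hij0
  -- no arc from S to complement
  have hnoarc : ∀ x y, S x → ¬ S y → ¬ Arc A w x y := by
    intro x y hx hy harc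
    exact hy (hx.tail harc)
  -- finset of crossing pairs
  set F : Finset (ι × ι) := Finset.univ.filter (fun q => S q.1 ∧ ¬ S q.2) with hF
  have hFne : F.Nonempty := ⟨(i0, j0), by simp [hF, hSi0, hSj0]⟩
  set c : ℝ := F.inf' hFne (fun q => A q.1 q.2 * w q.2 / w q.1) with hc
  have hkey : ∀ x y, S x → ¬ S y → w x / w y < A x y := by
    intro x y hx hy
    have := hnoarc x y hx hy
    unfold Arc at this
    push_neg at this
    exact this
  have hc1 : 1 < c := by
    rw [hc, Finset.lt_inf'_iff]
    rintro ⟨x, y⟩ hq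
    simp only [hF, Finset.mem_filter] at hq
    obtain ⟨_, hx, hy⟩ := hq
    have hlt := hkey x y hx hy
    have hwx := hw x
    have hwy := hw y
    rw [lt_div_iff₀ hwx]
    rw [div_lt_iff₀ hwy] at hlt
    nlinarith
  have hcle : ∀ x y, S x → ¬ S y → c ≤ A x y * w y / w x := by
    intro x y hx hy
    have hmemF : (x, y) ∈ F := by
      simp only [hF, Finset.mem_filter, Finset.mem_univ, true_and]
      exact ⟨hx, hy⟩
    exact Finset.inf'_le _ hmemF
  have hcpos : 0 < c := by linarith
  -- perturbed vector
  set v : ι → ℝ := fun k => if S k then c * w k else w k with hv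
  have hvpos : PosVec v := by
    intro k
    by_cases hk : S k <;> simp [hv, hk]
    · exact mul_pos hcpos (hw k)
    · exact hw k
  have vdef : ∀ k, v k = if S k then c * w k else w k := fun k => rfl
  have hineq : ∀ x y, |A x y - v x / v y| ≤ |A x y - w x / w y| := by
    intro x y
    by_cases hx : S x <;> by_cases hy : S y
    · rw [vdef x, vdef y, if_pos hx, if_pos hy,
        mul_div_mul_left _ _ (ne_of_gt hcpos)]
    · -- S x, ¬ S y
      rw [vdef x, vdef y, if_pos hx, if_neg hy]
      have hlt := hkey x y hx hy
      have hle2 := hcle x y hx hy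
      have hwx := hw x
      have hwy := hw y
      have h2 : c * w x ≤ A x y * w y := (le_div_iff₀ hwx).1 hle2
      have h3 : c * w x / w y ≤ A x y := by
        rw [div_le_iff₀ hwy]; linarith
      have h4 : w x / w y ≤ c * w x / w y := by
        rw [div_le_div_iff₀ hwy hwy]
        nlinarith [mul_nonneg (le_of_lt (sub_pos.2 hc1)) (le_of_lt (mul_pos hwx hwy))]
      rw [abs_of_nonneg (by linarith), abs_of_nonneg (by linarith)]
      linarith
    · -- ¬ S x, S y
      rw [vdef x, vdef y, if_neg hx, if_pos hy]
      have hlt := hkey y x hy hx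
      have hle2 := hcle y x hy hx
      have hwx := hw x
      have hwy := hw y
      have hAxy : A x y = 1 / A y x := hA.2 y x
      have hAyx := hA.1 y x
      have h2 : c * w y ≤ A y x * w x := (le_div_iff₀ hwy).1 hle2
      have h6 : A x y < w x / w y := by
        rw [hAxy, div_lt_div_iff₀ hAyx hwy]
        rw [div_lt_iff₀ hwx] at hlt
        nlinarith
      have h7 : A x y ≤ w x / (c * w y) := by
        rw [hAxy, div_le_div_iff₀ hAyx (mul_pos hcpos hwy)]
        nlinarith
      have h8 : w x / (c * w y) < w x / w y :=
        div_lt_div_of_pos_left hwx hwy (by nlinarith)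
      rw [abs_of_nonpos (by linarith), abs_of_nonpos (by linarith)]
      linarith
    · rw [vdef x, vdef y, if_neg hx, if_neg hy]
  obtain ⟨c', hc'pos, hveq⟩ := heff v hvpos hineq
  have h1 : v i0 = c' * w i0 := by rw [hveq]; rfl
  have h2 : v j0 = c' * w j0 := by rw [hveq]; rfl
  simp only [hv, if_pos hSi0] at h1
  simp only [hv, if_neg hSj0] at h2
  have e1 : c = c' := by
    have := hw i0
    have := mul_right_cancel₀ (ne_of_gt (hw i0)) h1
    exact this
  have e2 : c' = 1 := by
    have := hw j0
    nlinarith [h2]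
  rw [e1, e2] at hc1
  exact lt_irrefl _ hc1
end Eff2

theorem Eset_eq_iUnion_EsetSub {n : ℕ} (hn : 4 ≤ n) (A : Matrix (Fin n) (Fin n) ℝ)
    (hA : IsReciprocal A) :
    (Eset A = ⋃ i : Fin n, EsetSub A i) ∧
      (∀ p : Fin n, Eset A = ⋃ i : Fin n, ⋃ _ : i ≠ p, EsetSub A i) := by
  classical
  have main2 : ∀ p : Fin n, Eset A = ⋃ i : Fin n, ⋃ _ : i ≠ p, EsetSub A i := by
    intro p
    ext w
    constructor
    · intro hw
      have heff : IsEfficient A w := hw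
      have hwpos := heff.1
      have hsemi := arc_semi hA hwpos
      have hstrong := eff_imp_strong hA heff
      have hcard : 4 ≤ Fintype.card (Fin n) := by simpa using hn
      obtain ⟨i, hip, hsub⟩ := graph_main hsemi hstrong hcard p
      refine Set.mem_iUnion.2 ⟨i, Set.mem_iUnion.2 ⟨hip, heff, ?_⟩⟩
      haveI : Nonempty {x : Fin n // x ≠ i} := ⟨⟨p, Ne.symm hip⟩⟩
      have hwpos' : PosVec (delVec w i) := fun a => hwpos a.1
      apply strong_imp_eff hwpos'
      intro a b
      exact hsub a b
    · intro hw
      obtain ⟨i, hmem⟩ := Set.mem_iUnion.1 hw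
      obtain ⟨_, hmem⟩ := Set.mem_iUnion.1 hmem
      exact hmem.1
  refine ⟨?_, main2⟩
  have p0 : Fin n := ⟨0, by omega⟩
  ext w
  constructor
  · intro hw
    rw [main2 p0] at hw
    obtain ⟨i, hmem⟩ := Set.mem_iUnion.1 hw
    obtain ⟨_, hmem⟩ := Set.mem_iUnion.1 hmem
    exact Set.mem_iUnion.2 ⟨i, hmem⟩
  · intro hw
    obtain ⟨i, hmem⟩ := Set.mem_iUnion.1 hw
    exact hmem.1
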